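/- Let g : [t₁, T) → ℝ be positive and differentiable with g'(t) = 2·exp(ψ(t))·H(t)·g(t) where H(t) ≤ -ε₀ < 0 and ψ is continuous. Then for every T' ∈ [t₁, T), ∫_{t₁}^{T'} exp(ψ(t))·√(g(t)) dt ≤ (1/ε₀)·√(g(t₁)). -/

import Mathlib

open Real Set

theorem riemannian_volume_estimate_pointwise
    (t₁ T ε₀ : ℝ) (g ψ H : ℝ → ℝ)
    (hT : t₁ < T) (hε : 0 < ε₀)
    (hgpos : ∀ t ∈ Ico t₁ T, 0 < g t)
    (hψ : ContinuousOn ψ (Ico t₁ T))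
    (hHneg : ∀ t ∈ Ico t₁ T, H t ≤ -ε₀)
    (hg' : ∀ t ∈ Ico t₁ T, HasDerivAt g (2 * Real.exp (ψ t) * H t * g t) t) :
    ∀ T' ∈ Ico t₁ T,
      ∫ t in t₁..T', Real.exp (ψ t) * Real.sqrt (g t) ≤ (1 / ε₀) * Real.sqrt (g t₁) := by
  intro T' hT'
  obtain ⟨hT'1, hT'2⟩ := hT'
  set f : ℝ → ℝ := fun t => Real.exp (ψ t) * Real.sqrt (g t) with hf
  -- continuity of g on Ico
  have hgcont : ContinuousOn g (Ico t₁ T) := fun x hx =>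
    ((hg' x hx).continuousAt).continuousWithinAt
  have hfcont : ContinuousOn f (Ico t₁ T) := by
    exact (Real.continuous_exp.comp_continuousOn hψ).mul
      (Real.continuous_sqrt.comp_continuousOn hgcont)
  have hsub : Icc t₁ T' ⊆ Ico t₁ T := fun x hx => ⟨hx.1, lt_of_le_of_lt hx.2 hT'2⟩
  have hfint : IntervalIntegrable f MeasureTheory.volume t₁ T' := by
    apply ContinuousOn.intervalIntegrable
    rw [uIcc_of_le hT'1]
    exact hfcont.mono hsub
  set F : ℝ → ℝ := fun x => (ε₀ * ∫ t in t₁..x, f t) + Real.sqrt (g x)  with hFdef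
  have hF : F = fun x => ε₀ * (∫ t in t₁..x, f t) + Real.sqrt (g x) := rfl
  -- continuity of F on Icc t₁ T'
  have hFcont : ContinuousOn F (Icc t₁ T') := by
    rw [hF]
    apply ContinuousOn.add
    · apply continuousOn_const.mul
      have := intervalIntegral.continuousOn_primitive_interval
        (μ := MeasureTheory.volume) (f := f) (a := t₁) (b := T') ?_
      · rwa [uIcc_of_le hT'1] at this
      · rw [uIcc_of_le hT'1]
        exact (hfcont.mono hsub).integrableOn_compact isCompact_Icc
    · exact Real.continuous_sqrt.comp_continuousOn (hgcont.mono hsub)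
  -- derivative of F on interior
  have hFderiv : ∀ x ∈ Ioo t₁ T', HasDerivAt F
      (ε₀ * f x + Real.exp (ψ x) * H x * Real.sqrt (g x)) x := by
    intro x hx
    have hxI : x ∈ Ico t₁ T := ⟨hx.1.le, lt_trans hx.2 hT'2⟩
    have hgx : 0 < g x := hgpos x hxI
    have hx' : x ∈ Ioo t₁ T := ⟨hx.1, lt_trans hx.2 hT'2⟩
    have hopen : Ioo t₁ T ∈ nhds x := Ioo_mem_nhds hx.1 (lt_trans hx.2 hT'2)
    have hfca : ContinuousAt f x :=
      (hfcont.mono Ioo_subset_Ico_self).continuousAt hopen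
    have hfint' : IntervalIntegrable f MeasureTheory.volume t₁ x := by
      apply ContinuousOn.intervalIntegrable
      rw [uIcc_of_le hx.1.le]
      exact hfcont.mono (fun y hy => ⟨hy.1, lt_of_le_of_lt hy.2 (lt_trans hx.2 hT'2)⟩)
    have h1 : HasDerivAt (fun u => ∫ t in t₁..u, f t) (f x) x :=
      intervalIntegral.integral_hasDerivAt_right hfint'
        (ContinuousOn.stronglyMeasurableAtFilter isOpen_Ioo
          (hfcont.mono Ioo_subset_Ico_self) x hx') hfca
    have h2 : HasDerivAt (fun u => Real.sqrt (g u))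
        (2 * Real.exp (ψ x) * H x * g x / (2 * Real.sqrt (g x))) x :=
      (hg' x hxI).sqrt hgx.ne'
    have heq : 2 * Real.exp (ψ x) * H x * g x / (2 * Real.sqrt (g x))
        = Real.exp (ψ x) * H x * Real.sqrt (g x) := by
      rw [div_eq_iff (by positivity : (2 : ℝ) * Real.sqrt (g x) ≠ 0)]
      have hs : Real.sqrt (g x) * Real.sqrt (g x) = g x :=
        Real.mul_self_sqrt hgx.le
      linear_combination (-(2 * Real.exp (ψ x) * H x)) * hs
    rw [heq] at h2
    exact (h1.const_mul ε₀).add h2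
  -- F'(x) ≤ 0
  have hFanti : AntitoneOn F (Icc t₁ T') := by
    apply antitoneOn_of_deriv_nonpos (convex_Icc t₁ T') hFcont
    · intro x hx
      rw [interior_Icc] at hx
      exact ((hFderiv x hx).differentiableAt).differentiableWithinAt
    · intro x hx
      rw [interior_Icc] at hx
      rw [(hFderiv x hx).deriv]
      have hxI : x ∈ Ico t₁ T := ⟨hx.1.le, lt_trans hx.2 hT'2⟩
      have hs : 0 ≤ Real.sqrt (g x) := Real.sqrt_nonneg _
      have he : 0 < Real.exp (ψ x) := Real.exp_pos _
      have hH : H x ≤ -ε₀ := hHneg x hxI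
      have : ε₀ * f x + Real.exp (ψ x) * H x * Real.sqrt (g x)
          = Real.exp (ψ x) * Real.sqrt (g x) * (ε₀ + H x) := by
        simp only [hf]; ring
      rw [this]
      have : ε₀ + H x ≤ 0 := by linarith
      exact mul_nonpos_of_nonneg_of_nonpos (by positivity) this
  have hle : F T' ≤ F t₁ :=
    hFanti (left_mem_Icc.mpr hT'1) (right_mem_Icc.mpr hT'1) hT'1
  have hFt₁ : F t₁ = Real.sqrt (g t₁) := by
    simp [hF]
  have hsT' : 0 ≤ Real.sqrt (g T') := Real.sqrt_nonneg _
  have key : ε₀ * (∫ t in t₁..T', f t) ≤ Real.sqrt (g t₁) := by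
    have := hle
    rw [hFt₁] at this
    simp only [hF] at this
    linarith
  rw [div_mul_eq_mul_div, one_mul, le_div_iff₀ hε, mul_comm]
  exact key
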